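/- Let N ≥ 0 and define (η_i)_{i≥1} by η_{3k+1} = N+2−2τ_k, η_{3k+2} = N+τ_k, η_{3k+3} = N+1+τ_{k+1} for all k ≥ 0, where (τ_i) is the Thue–Morse sequence. Let φ₃ be the substitution 0 ↦ (N+1)(N+2)N, 1 ↦ (N+2)N(N+1). Then (η_i)_{i≥1} equals the shift by one of the concatenation φ₃(τ₀)φ₃(τ₁)φ₃(τ₂)⋯, i.e., for each k ≥ 0 the block (η_{3k+1}, η_{3k+2}, η_{3k+3}) matches the corresponding block of σ(φ₃(τ₀)φ₃(τ₁)⋯). -/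
import Mathlib


/-- (η_i)_{i≥1} is the shift by one of the concatenation φ₃(τ₀)φ₃(τ₁)⋯. -/
theorem eta_eq_shift_substitution (N : ℕ) (τ : ℕ → ℕ)
    (hτ0 : τ 0 = 0) (hτe : ∀ i, τ (2 * i) = τ i) (hτo : ∀ i, τ (2 * i + 1) = 1 - τ i)
    (η : ℕ → ℕ)
    (h1 : ∀ k, η (3 * k + 1) = N + 2 - 2 * τ k)
    (h2 : ∀ k, η (3 * k + 2) = N + τ k)
    (h3 : ∀ k, η (3 * k + 3) = N + 1 + τ (k + 1))
    (φ3 : ℕ → List ℕ)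
    (hφ0 : φ3 0 = [N + 1, N + 2, N]) (hφ1 : φ3 1 = [N + 2, N, N + 1])
    (c : ℕ → ℕ)
    (hc : ∀ k, [c (3 * k), c (3 * k + 1), c (3 * k + 2)] = φ3 (τ k)) :
    ∀ i, 1 ≤ i → η i = c i := by
  -- τ takes values in {0,1}
  have hτle : ∀ n, τ n ≤ 1 := by
    intro n
    induction n using Nat.strong_induction_on with
    | _ n ih =>
      rcases Nat.even_or_odd n with ⟨m, hm⟩ | ⟨m, hm⟩
      · rcases Nat.eq_zero_or_pos n with h0 | h0
        · simp [h0, hτ0]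
        · have hm' : n = 2 * m := by omega
          rw [hm', hτe]
          exact ih m (by omega)
      · rw [hm, hτo]
        omega
  -- components of hc
  have hcomp : ∀ k, c (3 * k) = N + 1 + τ k ∧ c (3 * k + 1) = N + 2 - 2 * τ k ∧
      c (3 * k + 2) = N + τ k := by
    intro k
    have hk := hc k
    have hle := hτle k
    interval_cases h : τ k
    · rw [hφ0] at hk
      simp at hk
      omega
    · rw [hφ1] at hk
      simp at hk
      omega
  intro i hi
  obtain ⟨k, r, hr, rfl⟩ : ∃ k r, r < 3 ∧ i = 3 * k + r :=
    ⟨i / 3, i % 3, Nat.mod_lt _ (by norm_num), by omega⟩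
  interval_cases r
  · -- i = 3k, k ≥ 1
    have hk1 : 1 ≤ k := by omega
    have : 3 * k + 0 = 3 * (k - 1) + 3 := by omega
    rw [this, h3 (k - 1)]
    have := (hcomp (k - 1 + 1)).1
    have hkk : 3 * (k - 1) + 3 = 3 * (k - 1 + 1) := by ring
    rw [hkk, this]
  · rw [h1 k, (hcomp k).2.1]
  · rw [h2 k, (hcomp k).2.2]
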